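/- Let Q be a finite quiver, A a subset of its arrows, and I the two-sided ideal of the path algebra kQ generated by a family of elements, each of which is a k-linear combination of paths that all contain at least one arrow from A. If c is a nontrivial oriented cycle in Q none of whose arrows belongs to A, then c^m ∉ I for every m ≥ 1; in particular kQ/I is infinite dimensional over k. -/

import Mathlib

structure QuiverData where
  V : Type
  E : Type
  s : E → V
  t : E → V

namespace QuiverData

/-- The defining relations of the path algebra `kQ`, presented as a quotient of the free
algebra on the vertices and arrows of `Q`: the vertices become a complete set of orthogonal
idempotents summing to `1`, and each arrow `e` is a path from `s e` to `t e`
(composition written left to right). -/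
inductive PRel (k : Type) [Field k] (Q : QuiverData) [Fintype Q.V] [DecidableEq Q.V] :
    FreeAlgebra k (Q.V ⊕ Q.E) → FreeAlgebra k (Q.V ⊕ Q.E) → Prop
  | idem (v : Q.V) :
      PRel k Q (FreeAlgebra.ι k (Sum.inl v) * FreeAlgebra.ι k (Sum.inl v))
        (FreeAlgebra.ι k (Sum.inl v))
  | orth (v w : Q.V) (h : v ≠ w) :
      PRel k Q (FreeAlgebra.ι k (Sum.inl v) * FreeAlgebra.ι k (Sum.inl w)) 0
  | unit :
      PRel k Q (∑ v : Q.V, FreeAlgebra.ι k (Sum.inl v)) 1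
  | src (v : Q.V) (e : Q.E) :
      PRel k Q (FreeAlgebra.ι k (Sum.inl v) * FreeAlgebra.ι k (Sum.inr e))
        (if v = Q.s e then FreeAlgebra.ι k (Sum.inr e) else 0)
  | tgt (v : Q.V) (e : Q.E) :
      PRel k Q (FreeAlgebra.ι k (Sum.inr e) * FreeAlgebra.ι k (Sum.inl v))
        (if v = Q.t e then FreeAlgebra.ι k (Sum.inr e) else 0)

/-- The path algebra `kQ` of a finite quiver. -/
abbrev PathAlg (k : Type) [Field k] (Q : QuiverData) [Fintype Q.V] [DecidableEq Q.V] :=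
  RingQuot (PRel k Q)

noncomputable def arrowElem (k : Type) [Field k] (Q : QuiverData) [Fintype Q.V]
    [DecidableEq Q.V] (e : Q.E) : PathAlg k Q :=
  RingQuot.mkAlgHom k (PRel k Q) (FreeAlgebra.ι k (Sum.inr e))

/-- The element of the path algebra given by a (composable) list of arrows. -/
noncomputable def pathElem (k : Type) [Field k] (Q : QuiverData) [Fintype Q.V]
    [DecidableEq Q.V] (l : List Q.E) : PathAlg k Q :=
  (l.map (arrowElem k Q)).prod

end QuiverData

namespace QAux

open QuiverData Matrix Polynomial

variable (k : Type) [Field k] (Q : QuiverData) [Fintype Q.V] [DecidableEq Q.V] (A : Set Q.E)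

open scoped Classical in
/-- generator images -/
noncomputable def fgen : Q.V ⊕ Q.E → Matrix Q.V Q.V (Polynomial k)
  | Sum.inl v => Matrix.single v v 1
  | Sum.inr e => if e ∈ A then 0 else Matrix.single (Q.s e) (Q.t e) X

lemma sum_diag : (∑ v : Q.V, Matrix.single v v (1 : Polynomial k)) = 1 := by
  ext i j
  simp only [Finset.sum_apply, Matrix.sum_apply, Matrix.single, of_apply, one_apply]
  rw [Finset.sum_eq_single i]
  · by_cases h : i = j <;> simp [h]
  · intro b _ hb; simp [hb]
  · simp

lemma rel_resp : ∀ ⦃x y⦄, PRel k Q x y →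
    FreeAlgebra.lift k (fgen k Q A) x = FreeAlgebra.lift k (fgen k Q A) y := by
  intro x y h
  induction h with
  | idem v => simp [fgen]
  | orth v w h => simp [fgen, Matrix.single_mul_single_of_ne (1 : Polynomial k) v v w h 1]
  | unit => simp [fgen, sum_diag]
  | src v e =>
      by_cases hA : e ∈ A
      · by_cases hv : v = Q.s e <;> simp [fgen, hA, hv]
      · by_cases hv : v = Q.s e
        · simp [fgen, hA, hv]
        · simp [fgen, hA, hv, Matrix.single_mul_single_of_ne (h := hv)]
  | tgt v e =>
      by_cases hA : e ∈ A
      · by_cases hv : v = Q.t e <;> simp [fgen, hA, hv]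
      · by_cases hv : v = Q.t e
        · simp [fgen, hA, hv]
        · simp [fgen, hA, hv, Matrix.single_mul_single_of_ne (X : Polynomial k) (Q.s e) (Q.t e) v (Ne.symm hv) 1]

noncomputable def phi : PathAlg k Q →ₐ[k] Matrix Q.V Q.V (Polynomial k) :=
  RingQuot.liftAlgHom k ⟨FreeAlgebra.lift k (fgen k Q A), rel_resp k Q A⟩

lemma phi_arrow (e : Q.E) : phi k Q A (arrowElem k Q e) = fgen k Q A (Sum.inr e) := by
  simp [phi, arrowElem, RingQuot.liftAlgHom_mkAlgHom_apply]

lemma phi_arrow_mem (e : Q.E) (he : e ∈ A) : phi k Q A (arrowElem k Q e) = 0 := by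
  classical
  simp [phi_arrow, fgen, he]

open scoped Classical in
lemma phi_arrow_not_mem (e : Q.E) (he : e ∉ A) :
    phi k Q A (arrowElem k Q e) = Matrix.single (Q.s e) (Q.t e) X := by
  simp [phi_arrow, fgen, he]

lemma phi_path_zero (l : List Q.E) (hl : ∃ a ∈ l, a ∈ A) :
    phi k Q A (pathElem k Q l) = 0 := by
  obtain ⟨a, ha, haA⟩ := hl
  rw [pathElem, map_list_prod]
  apply List.prod_eq_zero
  simp only [List.map_map, List.mem_map]
  exact ⟨a, ha, phi_arrow_mem k Q A a haA⟩

lemma phi_path (l : List Q.E) (h0 : l ≠ []) (hl : l.Chain' (fun a b => Q.t a = Q.s b))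
    (hA : ∀ a ∈ l, a ∉ A) :
    phi k Q A (pathElem k Q l)
      = Matrix.single (Q.s (l.head h0)) (Q.t (l.getLast h0)) (X ^ l.length) := by
  induction l with
  | nil => exact absurd rfl h0
  | cons e rest ih =>
    cases rest with
    | nil =>
        simp [pathElem, phi_arrow_not_mem k Q A e (hA e (by simp))]
    | cons e' rest' =>
        have hrest : (e' :: rest') ≠ [] := by simp
        have hstep : Q.t e = Q.s e' := (List.isChain_cons_cons.mp hl).1
        have : pathElem k Q (e :: e' :: rest') = arrowElem k Q e * pathElem k Q (e' :: rest') := by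
          simp [pathElem]
        rw [this, _root_.map_mul, phi_arrow_not_mem k Q A e (hA e (by simp)),
          ih hrest (List.isChain_cons_cons.mp hl).2 (fun a ha => hA a (List.mem_cons_of_mem _ ha))]
        simp only [List.head_cons, List.getLast_cons hrest]
        rw [← hstep, Matrix.single_mul_single_same]
        congr 1
        simp only [List.length_cons]
        ring

lemma pathElem_append (l1 l2 : List Q.E) :
    pathElem k Q (l1 ++ l2) = pathElem k Q l1 * pathElem k Q l2 := by
  simp [pathElem]

lemma pathElem_flatten_replicate (c : List Q.E) (m : ℕ) :
    pathElem k Q (List.flatten (List.replicate m c)) = (pathElem k Q c) ^ m := by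
  induction m with
  | zero => simp [pathElem]
  | succ n ih => rw [List.replicate_succ, List.flatten_cons, pathElem_append, ih, pow_succ']

lemma stdBasis_pow (u : Q.V) (q : Polynomial k) (m : ℕ) :
    (Matrix.single u u q) ^ (m + 1) = Matrix.single u u (q ^ (m + 1)) := by
  induction m with
  | zero => simp
  | succ n ih => rw [pow_succ, ih, Matrix.single_mul_single_same, ← pow_succ]

lemma li_Xpow (f : ℕ → ℕ) (hf : Function.Injective f) :
    LinearIndependent k (fun n => (X : Polynomial k) ^ (f n)) := by
  rw [linearIndependent_iff']
  intro s g hsum i hi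
  have h := congrArg (fun p => Polynomial.coeff p (f i)) hsum
  simp only [Polynomial.finset_sum_coeff, Polynomial.coeff_smul, Polynomial.coeff_X_pow,
    smul_eq_mul, Polynomial.coeff_zero, mul_ite, mul_one, mul_zero] at h
  rwa [Finset.sum_eq_single i (fun b _ hbi => if_neg (fun hfb => hbi (hf hfb).symm)) (fun h' => absurd hi h'),
    if_pos rfl] at h


lemma phi_gens_zero (gens : Set (PathAlg k Q))
    (hg : ∀ g ∈ gens, g ∈ Submodule.span k
      {y : PathAlg k Q | ∃ l : List Q.E,
        l.Chain' (fun a b => Q.t a = Q.s b) ∧ (∃ a ∈ l, a ∈ A) ∧ y = pathElem k Q l})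
    (g : PathAlg k Q) (hgg : g ∈ gens) : phi k Q A g = 0 := by
  have hsub : {y : PathAlg k Q | ∃ l : List Q.E,
        l.Chain' (fun a b => Q.t a = Q.s b) ∧ (∃ a ∈ l, a ∈ A) ∧ y = pathElem k Q l}
      ⊆ (LinearMap.ker (phi k Q A).toLinearMap : Set (PathAlg k Q)) := by
    rintro y ⟨l, _, hla, rfl⟩
    simpa [LinearMap.mem_ker] using phi_path_zero k Q A l hla
  have := Submodule.span_le.mpr hsub (hg g hgg)
  simpa [LinearMap.mem_ker] using this

lemma ideal_le_ker (gens : Set (PathAlg k Q))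
    (hg : ∀ g ∈ gens, g ∈ Submodule.span k
      {y : PathAlg k Q | ∃ l : List Q.E,
        l.Chain' (fun a b => Q.t a = Q.s b) ∧ (∃ a ∈ l, a ∈ A) ∧ y = pathElem k Q l}) :
    Submodule.span k {x : PathAlg k Q | ∃ g ∈ gens, ∃ a b : PathAlg k Q, x = a * g * b}
      ≤ LinearMap.ker (phi k Q A).toLinearMap := by
  rw [Submodule.span_le]
  rintro x ⟨g, hgg, a, b, rfl⟩
  simp [LinearMap.mem_ker, phi_gens_zero k Q A gens hg g hgg]

noncomputable def psi (u : Q.V) : PathAlg k Q →ₗ[k] Polynomial k where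
  toFun x := phi k Q A x u u
  map_add' x y := by simp
  map_smul' a x := by simp

end QAux


/-- if `I` is the two-sided ideal of `kQ` generated by elements that are linear
combinations of paths each containing an arrow from `A`, and `c` is a nontrivial oriented cycle
avoiding `A`, then no power of `c` lies in `I`, and `kQ/I` is infinite dimensional. -/
theorem stmt3 (k : Type) [Field k] (Q : QuiverData) [Fintype Q.V] [Fintype Q.E]
    [DecidableEq Q.V]
    (A : Set Q.E) (gens : Set (QuiverData.PathAlg k Q))
    (hg : ∀ g ∈ gens, g ∈ Submodule.span k
      {y : QuiverData.PathAlg k Q | ∃ l : List Q.E,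
        l.Chain' (fun a b => Q.t a = Q.s b) ∧ (∃ a ∈ l, a ∈ A) ∧
        y = QuiverData.pathElem k Q l})
    (c : List Q.E) (hc0 : c ≠ [])
    (hchain : c.Chain' (fun a b => Q.t a = Q.s b))
    (hcyc : Q.t (c.getLast hc0) = Q.s (c.head hc0))
    (hcA : ∀ a ∈ c, a ∉ A) :
    (∀ m : ℕ, 1 ≤ m →
      QuiverData.pathElem k Q (List.flatten (List.replicate m c)) ∉
        Submodule.span k {x : QuiverData.PathAlg k Q |
          ∃ g ∈ gens, ∃ a b : QuiverData.PathAlg k Q, x = a * g * b}) ∧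
    ¬ Module.Finite k (QuiverData.PathAlg k Q ⧸
        Submodule.span k {x : QuiverData.PathAlg k Q |
          ∃ g ∈ gens, ∃ a b : QuiverData.PathAlg k Q, x = a * g * b}) := by
  classical
  open QuiverData Matrix Polynomial in
  set I := Submodule.span k {x : QuiverData.PathAlg k Q |
      ∃ g ∈ gens, ∃ a b : QuiverData.PathAlg k Q, x = a * g * b} with hI
  have hker : I ≤ LinearMap.ker (QAux.phi k Q A).toLinearMap := QAux.ideal_le_ker k Q A gens hg
  set u := Q.s (c.head hc0) with hu
  have hphic : QAux.phi k Q A (pathElem k Q c) = Matrix.single u u (X ^ c.length) := by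
    rw [QAux.phi_path k Q A c hc0 hchain hcA, hcyc]
  have hd : 1 ≤ c.length := by
    cases c with
    | nil => exact absurd rfl hc0
    | cons a l => simp
  have hpow : ∀ m : ℕ, 1 ≤ m →
      QAux.phi k Q A (pathElem k Q (List.flatten (List.replicate m c)))
        = Matrix.single u u (X ^ (c.length * m)) := by
    intro m hm
    obtain ⟨n, rfl⟩ := Nat.exists_eq_add_of_le hm
    rw [QAux.pathElem_flatten_replicate, map_pow, hphic]
    rw [show 1 + n = n + 1 from Nat.add_comm 1 n, QAux.stdBasis_pow, ← pow_mul]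
  have hpsiker : I ≤ LinearMap.ker (QAux.psi k Q A u) := by
    intro x hx
    have h0 : QAux.phi k Q A x = 0 := by simpa [LinearMap.mem_ker] using hker hx
    simp [LinearMap.mem_ker, QAux.psi, h0]
  constructor
  · intro m hm hmem
    have h0 : QAux.phi k Q A (pathElem k Q (List.flatten (List.replicate m c))) = 0 := by
      simpa [LinearMap.mem_ker] using hker hmem
    rw [hpow m hm] at h0
    have := congrArg (fun M => M u u) h0
    simp only [Matrix.single_apply_same, Matrix.zero_apply] at this
    exact pow_ne_zero _ Polynomial.X_ne_zero this
  · intro hfin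
    set psibar : (QuiverData.PathAlg k Q ⧸ I) →ₗ[k] Polynomial k :=
      I.liftQ (QAux.psi k Q A u) hpsiker with hpsibar
    set v : ℕ → (QuiverData.PathAlg k Q ⧸ I) := fun n =>
      Submodule.Quotient.mk (pathElem k Q (List.flatten (List.replicate (n + 1) c))) with hv
    have hcomp : psibar ∘ v = fun n => (X : Polynomial k) ^ (c.length * (n + 1)) := by
      funext n
      simp only [Function.comp_apply, hv, hpsibar, Submodule.liftQ_apply]
      show QAux.phi k Q A (pathElem k Q (List.flatten (List.replicate (n + 1) c))) u u = _
      rw [hpow (n + 1) (Nat.le_add_left 1 n)]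
      simp
    have hli : LinearIndependent k v := by
      apply LinearIndependent.of_comp psibar
      rw [hcomp]
      exact QAux.li_Xpow k (fun n => c.length * (n + 1)) (fun a b hab => by
        have := Nat.eq_of_mul_eq_mul_left (lt_of_lt_of_le Nat.zero_lt_one hd) hab
        omega)
    have : Finite ℕ := hli.finite_of_isNoetherian
    exact _root_.not_finite ℕ
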